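/- Let G be a finite group with center Z, ρ: G → GL(V) irreducible with |G/Z| = s² where s = dim V, and let g₁,…,g_t (t = |G/Z|) be any set of coset representatives of Z in G. Then ρ(g₁),…,ρ(g_t) form a basis of End_ℂ(V). -/

import Mathlib

open Module LinearMap

/-- Schur: an operator commuting with the whole image of `ρ` is scalar. -/
lemma aux_schur {G V : Type*} [Group G] [AddCommGroup V] [Module ℂ V]
    [FiniteDimensional ℂ V] [Nontrivial V] (ρ : Representation ℂ G V)
    (hirr : ∀ U : Submodule ℂ V, (∀ g : G, ∀ v ∈ U, ρ g v ∈ U) → U = ⊥ ∨ U = ⊤)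
    (T : V →ₗ[ℂ] V) (hT : ∀ g : G, ρ g * T = T * ρ g) :
    ∃ c : ℂ, T = c • (1 : V →ₗ[ℂ] V) := by
  obtain ⟨c, hc⟩ := Module.End.exists_eigenvalue (T : Module.End ℂ V)
  refine ⟨c, ?_⟩
  have hU : ∀ g : G, ∀ v ∈ Module.End.eigenspace T c, ρ g v ∈ Module.End.eigenspace T c := by
    intro g v hv
    rw [Module.End.mem_eigenspace_iff] at hv ⊢
    have h1 : ρ g (T v) = T (ρ g v) := by
      have := LinearMap.congr_fun (hT g) v
      simpa [Module.End.mul_apply] using this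
    rw [← h1, hv, map_smul]
  rcases hirr _ hU with h | h
  · exact absurd h hc
  · ext v
    have hv : v ∈ Module.End.eigenspace T c := h ▸ Submodule.mem_top
    rw [Module.End.mem_eigenspace_iff] at hv
    simpa using hv

/-- Averaging: `∑ g, ρ g * B * ρ g⁻¹` is scalar with trace `|G| · tr B`. -/
lemma aux_avg {G V : Type*} [Group G] [Fintype G] [AddCommGroup V] [Module ℂ V]
    [FiniteDimensional ℂ V] [Nontrivial V] (ρ : Representation ℂ G V)
    (hirr : ∀ U : Submodule ℂ V, (∀ g : G, ∀ v ∈ U, ρ g v ∈ U) → U = ⊥ ∨ U = ⊤)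
    (B : V →ₗ[ℂ] V) :
    ∃ c : ℂ, (∑ g : G, ρ g * B * ρ g⁻¹) = c • (1 : V →ₗ[ℂ] V) ∧
      c * (finrank ℂ V : ℂ) = (Fintype.card G : ℂ) * LinearMap.trace ℂ V B := by
  set Φ : V →ₗ[ℂ] V := ∑ g : G, ρ g * B * ρ g⁻¹ with hΦ
  have comm : ∀ h : G, ρ h * Φ = Φ * ρ h := by
    intro h
    rw [hΦ, Finset.mul_sum, Finset.sum_mul]
    refine Fintype.sum_equiv (Equiv.mulLeft h) _ _ ?_
    intro g
    show ρ h * (ρ g * B * ρ g⁻¹) = ρ (h * g) * B * ρ (h * g)⁻¹ * ρ h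
    rw [map_mul, mul_inv_rev, map_mul]
    rw [mul_assoc (ρ h * ρ g * B), mul_assoc (ρ g⁻¹), ← map_mul ρ h⁻¹ h, inv_mul_cancel,
      map_one, mul_one, mul_assoc, mul_assoc, mul_assoc]
  obtain ⟨c, hc⟩ := aux_schur ρ hirr Φ comm
  refine ⟨c, hc, ?_⟩
  have h1 : LinearMap.trace ℂ V Φ = (Fintype.card G : ℂ) * LinearMap.trace ℂ V B := by
    rw [hΦ, map_sum]
    have : ∀ g : G, LinearMap.trace ℂ V (ρ g * B * ρ g⁻¹) = LinearMap.trace ℂ V B := by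
      intro g
      rw [LinearMap.trace_mul_comm, ← mul_assoc, ← map_mul, inv_mul_cancel, map_one, one_mul]
    simp [this, Finset.sum_const, nsmul_eq_mul]
  have h2 : LinearMap.trace ℂ V Φ = c * (finrank ℂ V : ℂ) := by
    rw [hc, map_smul, LinearMap.trace_one]
    simp [smul_eq_mul]
  rw [← h2, h1]

lemma aux_span {G V : Type*} [Group G] [Fintype G] [AddCommGroup V] [Module ℂ V]
    [FiniteDimensional ℂ V] [Nontrivial V] (ρ : Representation ℂ G V)
    (hirr : ∀ U : Submodule ℂ V, (∀ g : G, ∀ v ∈ U, ρ g v ∈ U) → U = ⊥ ∨ U = ⊤) :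
    Submodule.span ℂ (Set.range fun g : G => (ρ g : V →ₗ[ℂ] V)) = ⊤ := by
  classical
  set n := finrank ℂ V with hn
  have hnpos : 0 < n := finrank_pos
  have hn0 : (n : ℂ) ≠ 0 := Nat.cast_ne_zero.mpr hnpos.ne'
  let b : Basis (Fin n) ℂ V := finBasis ℂ V
  let e : (V →ₗ[ℂ] V) ≃ₐ[ℂ] Matrix (Fin n) (Fin n) ℂ := LinearMap.toMatrixAlgEquiv b
  set M : G → Matrix (Fin n) (Fin n) ℂ := fun g => e (ρ g) with hM
  have mulE : ∀ (A B : Matrix (Fin n) (Fin n) ℂ) (j k i l : Fin n),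
      (A * Matrix.single j k (1 : ℂ) * B) i l = A i j * B k l := by
    intro A B j k i l
    rw [mul_assoc, Matrix.mul_apply, Finset.sum_eq_single j]
    · rw [Matrix.single_mul_apply_same, one_mul]
    · intro q _ hq
      rw [Matrix.single_mul_apply_of_ne _ _ _ _ _ hq, mul_zero]
    · simp
  have key : ∀ i j k l : Fin n, (∑ g : G, M g i j * M g⁻¹ k l) =
      if j = k ∧ i = l then (Fintype.card G : ℂ) / n else 0 := by
    intro i j k l
    obtain ⟨c, hc1, hc2⟩ := aux_avg ρ hirr (e.symm (Matrix.single j k (1 : ℂ)))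
    have htr : LinearMap.trace ℂ V (e.symm (Matrix.single j k (1 : ℂ))) =
        if j = k then 1 else 0 := by
      rw [LinearMap.trace_eq_matrix_trace ℂ b]
      have h3 : LinearMap.toMatrix b b (e.symm (Matrix.single j k (1 : ℂ))) =
          Matrix.single j k (1 : ℂ) := e.apply_symm_apply _
      rw [h3]
      by_cases h : j = k
      · subst h; simp [Matrix.trace_single_eq_same, if_pos rfl]
      · rw [Matrix.trace_single_eq_of_ne _ _ _ h, if_neg h]
    have hc : c = if j = k then (Fintype.card G : ℂ) / n else 0 := by
      rw [htr] at hc2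
      by_cases h : j = k
      · rw [if_pos h]
        rw [if_pos h] at hc2
        rw [eq_div_iff hn0]
        rw [mul_one] at hc2
        exact hc2
      · rw [if_neg h]
        rw [if_neg h, mul_zero] at hc2
        exact (mul_eq_zero.mp hc2).resolve_right hn0
    have hc1' : (∑ g : G, M g * Matrix.single j k (1 : ℂ) * M g⁻¹)
        = c • (1 : Matrix (Fin n) (Fin n) ℂ) := by
      have h4 := congrArg e hc1
      rw [map_sum, map_smul, map_one] at h4
      rw [← h4]
      refine Finset.sum_congr rfl fun g _ => ?_
      rw [map_mul, map_mul, AlgEquiv.apply_symm_apply]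
    have h5 := congrArg (fun A : Matrix (Fin n) (Fin n) ℂ => A i l) hc1'
    simp only [Matrix.sum_apply, Matrix.smul_apply, smul_eq_mul] at h5
    have h6 : ∀ g ∈ Finset.univ, (M g * Matrix.single j k (1 : ℂ) * M g⁻¹) i l
        = M g i j * M g⁻¹ k l := fun g _ => mulE _ _ _ _ _ _
    rw [Finset.sum_congr rfl h6] at h5
    rw [h5, hc]
    by_cases h : j = k <;> by_cases h' : i = l <;>
      simp [h, h', Matrix.one_apply]
  -- every std basis matrix is in the span of the M g
  have hstd : ∀ l k : Fin n, Matrix.single l k (1 : ℂ) ∈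
      Submodule.span ℂ (Set.range M) := by
    intro l k
    have hq : ((Fintype.card G : ℂ) / n) ≠ 0 := by
      apply div_ne_zero
      · exact Nat.cast_ne_zero.mpr Fintype.card_pos.ne'
      · exact hn0
    have hsum : (∑ g : G, M g⁻¹ k l • M g) =
        ((Fintype.card G : ℂ) / n) • Matrix.single l k (1 : ℂ) := by
      ext i j
      rw [Matrix.sum_apply]
      simp only [Matrix.smul_apply, smul_eq_mul]
      have : ∀ g : G, M g⁻¹ k l * M g i j = M g i j * M g⁻¹ k l := fun g => mul_comm _ _
      rw [Finset.sum_congr rfl fun g _ => this g, key i j k l]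
      by_cases h' : i = l
      · subst h'
        by_cases h : j = k
        · subst h
          simp [Matrix.single, Matrix.of_apply]
        · simp [Matrix.single, Matrix.of_apply, h, Ne.symm h]
      · have h'' : ¬ (l = i) := fun hli => h' hli.symm
        simp [Matrix.single, Matrix.of_apply, h', h'']
    have hmem : (∑ g : G, M g⁻¹ k l • M g) ∈ Submodule.span ℂ (Set.range M) :=
      Submodule.sum_mem _ fun g _ =>
        Submodule.smul_mem _ _ (Submodule.subset_span ⟨g, rfl⟩)
    rw [hsum] at hmem
    have := Submodule.smul_mem (Submodule.span ℂ (Set.range M)) ((Fintype.card G : ℂ) / n)⁻¹ hmem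
    rwa [smul_smul, inv_mul_cancel₀ hq, one_smul] at this
  have hspanM : Submodule.span ℂ (Set.range M) = ⊤ := by
    rw [eq_top_iff]
    intro A _
    rw [Matrix.matrix_eq_sum_single A]
    refine Submodule.sum_mem _ fun i _ => Submodule.sum_mem _ fun j _ => ?_
    have : Matrix.single i j (A i j) = A i j • Matrix.single i j (1 : ℂ) := by
      rw [Matrix.smul_single, smul_eq_mul, mul_one]
    rw [this]
    exact Submodule.smul_mem _ _ (hstd i j)
  -- pull back along e
  have : Submodule.map ((e.symm.toLinearEquiv : Matrix (Fin n) (Fin n) ℂ ≃ₗ[ℂ] (V →ₗ[ℂ] V)) : Matrix (Fin n) (Fin n) ℂ →ₗ[ℂ] (V →ₗ[ℂ] V))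
      (Submodule.span ℂ (Set.range M)) = Submodule.span ℂ (Set.range fun g : G => (ρ g : V →ₗ[ℂ] V)) := by
    rw [Submodule.map_span]
    congr 1
    rw [← Set.range_comp]
    refine congrArg _ (funext fun g => ?_)
    show e.symm (M g) = ρ g
    rw [hM]
    exact e.symm_apply_apply _
  rw [← this, hspanM, Submodule.map_top]
  exact LinearEquiv.range _



/-- If `ρ` is irreducible with `|G/Z| = (dim V)²`, then the images under `ρ` of any
set of coset representatives of the center form a basis of `End_ℂ(V)`. -/
theorem stmt_3 {G V : Type*} [Group G] [Fintype G]
    [AddCommGroup V] [Module ℂ V] [FiniteDimensional ℂ V] [Nontrivial V]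
    (ρ : Representation ℂ G V)
    (hirr : ∀ U : Submodule ℂ V, (∀ g : G, ∀ v ∈ U, ρ g v ∈ U) → U = ⊥ ∨ U = ⊤)
    (hcard : Nat.card (G ⧸ Subgroup.center G) = (Module.finrank ℂ V) ^ 2)
    (R : G ⧸ Subgroup.center G → G)
    (hR : ∀ γ : G ⧸ Subgroup.center G, (QuotientGroup.mk (R γ) : G ⧸ Subgroup.center G) = γ) :
    LinearIndependent ℂ (fun γ : G ⧸ Subgroup.center G => (ρ (R γ) : V →ₗ[ℂ] V)) ∧
      Submodule.span ℂ (Set.range fun γ : G ⧸ Subgroup.center G => (ρ (R γ) : V →ₗ[ℂ] V)) = ⊤ := by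
  classical
  have hspanG : Submodule.span ℂ (Set.range fun g : G => (ρ g : V →ₗ[ℂ] V)) = ⊤ :=
    aux_span ρ hirr
  -- central elements act by nonzero scalars
  have hcen : ∀ z ∈ Subgroup.center G, ∃ c : ℂ, c ≠ 0 ∧ (ρ z : V →ₗ[ℂ] V) = c • 1 := by
    intro z hz
    have hcomm : ∀ g : G, ρ g * ρ z = ρ z * ρ g := by
      intro g
      rw [← map_mul, ← map_mul, Subgroup.mem_center_iff.mp hz g]
    obtain ⟨c, hc⟩ := aux_schur ρ hirr (ρ z) hcomm
    refine ⟨c, ?_, hc⟩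
    intro h0
    rw [h0, zero_smul] at hc
    have h1 : (ρ z : V →ₗ[ℂ] V) * ρ z⁻¹ = 1 := by
      rw [← map_mul, mul_inv_cancel, map_one]
    rw [hc, zero_mul] at h1
    obtain ⟨v, hv⟩ := exists_ne (0 : V)
    exact hv (by simpa using (LinearMap.congr_fun h1 v).symm)
  -- the span of the coset representatives is everything
  have hspanR : Submodule.span ℂ
      (Set.range fun γ : G ⧸ Subgroup.center G => (ρ (R γ) : V →ₗ[ℂ] V)) = ⊤ := by
    rw [eq_top_iff, ← hspanG, Submodule.span_le]
    rintro _ ⟨g, rfl⟩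
    set γ : G ⧸ Subgroup.center G := QuotientGroup.mk g with hγ
    have hz : (R γ)⁻¹ * g ∈ Subgroup.center G := by
      have h2 : (QuotientGroup.mk (R γ) : G ⧸ Subgroup.center G) = QuotientGroup.mk g := hR γ
      rwa [QuotientGroup.eq] at h2
    obtain ⟨c, hc0, hc⟩ := hcen _ hz
    have hg : (ρ g : V →ₗ[ℂ] V) = c • ρ (R γ) := by
      have h3 : g = R γ * ((R γ)⁻¹ * g) := by group
      calc (ρ g : V →ₗ[ℂ] V) = ρ (R γ * ((R γ)⁻¹ * g)) := by rw [← h3]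
        _ = ρ (R γ) * ρ ((R γ)⁻¹ * g) := by rw [map_mul]
        _ = ρ (R γ) * (c • 1) := by rw [hc]
        _ = c • ρ (R γ) := by rw [mul_smul_comm, mul_one]
    show (ρ g : V →ₗ[ℂ] V) ∈ Submodule.span ℂ
      (Set.range fun γ : G ⧸ Subgroup.center G => (ρ (R γ) : V →ₗ[ℂ] V))
    rw [hg]
    exact Submodule.smul_mem _ _ (Submodule.subset_span ⟨γ, rfl⟩)
  have : Fintype (G ⧸ Subgroup.center G) := Fintype.ofFinite _
  have hcardt : Fintype.card (G ⧸ Subgroup.center G) = Module.finrank ℂ (V →ₗ[ℂ] V) := by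
    rw [← Nat.card_eq_fintype_card, hcard, Module.finrank_linearMap, sq]
  exact ⟨linearIndependent_of_top_le_span_of_card_eq_finrank hspanR.ge hcardt, hspanR⟩
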